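/- Define, for nonzero ν ∈ ℝⁿ and symmetric M, F(ν, M) = (p−2)⟨Mν,ν⟩/|ν|² + tr(M) where p ∈ ℝ is fixed. Let ν_m → ν ≠ 0 and M_m → M. Then inf over a ∈ 𝕊^{n−1} and c ∈ [0,m] of sup over b ∈ 𝕊^{n−1} and d ∈ [0,m] of [ −tr(A_{a,b} M_m) − (c+d)⟨a+b, ν_m⟩ ] converges to −F(ν, M) as m → ∞, where A_{a,b} = (1/2)(p−2)(a⊗a+b⊗b) + I. -/

import Mathlib

open Matrix

namespace BIaux
variable {n : ℕ} {p : ℝ}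

noncomputable def qf (N : Matrix (Fin n) (Fin n) ℝ) (x : Fin n → ℝ) : ℝ := x ⬝ᵥ N.mulVec x
noncomputable def Kf (N : Matrix (Fin n) (Fin n) ℝ) : ℝ := ∑ i, ∑ j, |N i j|

lemma Kf_nonneg (N : Matrix (Fin n) (Fin n) ℝ) : 0 ≤ Kf N :=
  Finset.sum_nonneg fun _ _ => Finset.sum_nonneg fun _ _ => abs_nonneg _

lemma dot_self_nonneg (x : Fin n → ℝ) : 0 ≤ x ⬝ᵥ x :=
  Finset.sum_nonneg fun i _ => mul_self_nonneg _

lemma dot_self_pos {x : Fin n → ℝ} (hx : x ≠ 0) : 0 < x ⬝ᵥ x := by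
  rcases Function.ne_iff.1 hx with ⟨i, hi⟩
  have : (0:ℝ) < x i * x i := mul_self_pos.2 hi
  refine lt_of_lt_of_le this ?_
  exact Finset.single_le_sum (f := fun j => x j * x j)
    (fun j _ => mul_self_nonneg _) (Finset.mem_univ i)

lemma comp_abs_le (x : Fin n → ℝ) (i : Fin n) : |x i| ≤ Real.sqrt (x ⬝ᵥ x) := by
  have h1 : x i ^ 2 ≤ x ⬝ᵥ x := by
    have := Finset.single_le_sum (f := fun j => x j * x j)
      (fun j _ => mul_self_nonneg _) (Finset.mem_univ i)
    simpa [dotProduct, sq] using this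
  have := Real.sqrt_le_sqrt h1
  simpa [Real.sqrt_sq_eq_abs] using this

lemma abs_dot_le (x y : Fin n → ℝ) :
    |x ⬝ᵥ y| ≤ Real.sqrt (x ⬝ᵥ x) * Real.sqrt (y ⬝ᵥ y) := by
  have h := Finset.sum_mul_sq_le_sq_mul_sq Finset.univ x y
  have h2 : (x ⬝ᵥ y) ^ 2 ≤ (x ⬝ᵥ x) * (y ⬝ᵥ y) := by
    simpa [dotProduct, sq] using h
  have := Real.sqrt_le_sqrt h2
  rw [Real.sqrt_mul (dot_self_nonneg x)] at this
  simpa [Real.sqrt_sq_eq_abs] using this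

lemma bilin_bound {α β : ℝ} (hα : 0 ≤ α) (hβ : 0 ≤ β) {x y : Fin n → ℝ}
    (hx : ∀ i, |x i| ≤ α) (hy : ∀ i, |y i| ≤ β) (N : Matrix (Fin n) (Fin n) ℝ) :
    |x ⬝ᵥ N.mulVec y| ≤ α * β * Kf N := by
  have h1 : |x ⬝ᵥ N.mulVec y| ≤ ∑ i, ∑ j, |x i| * |N i j| * |y j| := by
    refine (Finset.abs_sum_le_sum_abs _ _).trans ?_
    refine Finset.sum_le_sum fun i _ => ?_
    rw [mulVec, dotProduct, abs_mul]
    refine le_trans (mul_le_mul_of_nonneg_left (Finset.abs_sum_le_sum_abs _ _) (abs_nonneg _)) ?_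
    rw [Finset.mul_sum]
    refine Finset.sum_le_sum fun j _ => ?_
    rw [abs_mul]; ring_nf; rfl
  refine h1.trans ?_
  rw [Kf, Finset.mul_sum]
  refine Finset.sum_le_sum fun i _ => ?_
  rw [Finset.mul_sum]
  refine Finset.sum_le_sum fun j _ => ?_
  calc |x i| * |N i j| * |y j| ≤ α * |N i j| * β := by
        refine mul_le_mul (mul_le_mul_of_nonneg_right (hx i) (abs_nonneg _)) (hy j)
          (abs_nonneg _) (by positivity)
    _ = α * β * |N i j| := by ring

lemma qf_abs_le {x : Fin n → ℝ} (hx : x ⬝ᵥ x = 1) (N : Matrix (Fin n) (Fin n) ℝ) :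
    |qf N x| ≤ Kf N := by
  have hc : ∀ i, |x i| ≤ 1 := by
    intro i
    simpa [hx] using comp_abs_le x i
  simpa [qf] using bilin_bound zero_le_one zero_le_one hc hc N

lemma qf_neg (N : Matrix (Fin n) (Fin n) ℝ) (x : Fin n → ℝ) : qf N (-x) = qf N x := by
  simp [qf, Matrix.mulVec_neg, dotProduct_neg, neg_dotProduct]

lemma qf_sub (N : Matrix (Fin n) (Fin n) ℝ) (a b : Fin n → ℝ) :
    qf N b - qf N a = (a + b) ⬝ᵥ N.mulVec b - a ⬝ᵥ N.mulVec (a + b) := by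
  simp [qf, add_dotProduct, Matrix.mulVec_add, dotProduct_add]
  ring

lemma qf_diff_bound {a b : Fin n → ℝ} (ha : a ⬝ᵥ a = 1) (hb : b ⬝ᵥ b = 1)
    (N : Matrix (Fin n) (Fin n) ℝ) :
    |qf N b - qf N a| ≤ 2 * Kf N * Real.sqrt ((a + b) ⬝ᵥ (a + b)) := by
  set s := Real.sqrt ((a + b) ⬝ᵥ (a + b)) with hs
  have hs0 : 0 ≤ s := Real.sqrt_nonneg _
  have hca : ∀ i, |a i| ≤ 1 := fun i => by simpa [ha] using comp_abs_le a i
  have hcb : ∀ i, |b i| ≤ 1 := fun i => by simpa [hb] using comp_abs_le b i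
  have hcs : ∀ i, |(a + b) i| ≤ s := fun i => comp_abs_le (a + b) i
  rw [qf_sub]
  refine (abs_sub _ _).trans ?_
  have h1 := bilin_bound hs0 zero_le_one hcs hcb N
  have h2 := bilin_bound zero_le_one hs0 hca hcs N
  nlinarith [Kf_nonneg N]


lemma unit_neg {a : Fin n → ℝ} (ha : a ⬝ᵥ a = 1) : (-a) ⬝ᵥ (-a) = 1 := by
  simpa [neg_dotProduct, dotProduct_neg] using ha

lemma abs_dot_le_of_unit {a : Fin n → ℝ} (ha : a ⬝ᵥ a = 1) (w : Fin n → ℝ) :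
    |a ⬝ᵥ w| ≤ Real.sqrt (w ⬝ᵥ w) := by
  simpa [ha] using abs_dot_le a w

lemma add_dot_add (a b : Fin n → ℝ) :
    (a + b) ⬝ᵥ (a + b) = a ⬝ᵥ a + 2 * (a ⬝ᵥ b) + b ⬝ᵥ b := by
  simp [add_dotProduct, dotProduct_add, dotProduct_comm b a]
  ring

lemma smul_dot (t : ℝ) (x y : Fin n → ℝ) : (t • x) ⬝ᵥ y = t * (x ⬝ᵥ y) := by
  simp [smul_dotProduct]

lemma qf_smul (N : Matrix (Fin n) (Fin n) ℝ) (t : ℝ) (x : Fin n → ℝ) :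
    qf N (t • x) = t * t * qf N x := by
  simp [qf, Matrix.mulVec_smul, smul_dotProduct, dotProduct_smul, smul_eq_mul]
  ring

lemma trace_outer (N : Matrix (Fin n) (Fin n) ℝ) (x : Fin n → ℝ) :
    ∑ i, ∑ j, (x i * x j) * N j i = qf N x := by
  rw [Finset.sum_comm]
  simp only [qf, dotProduct, mulVec, Finset.mul_sum]
  exact Finset.sum_congr rfl fun j _ => Finset.sum_congr rfl fun i _ => by ring

lemma trace_eq (s : ℝ) (N : Matrix (Fin n) (Fin n) ℝ) (a b : Fin n → ℝ) :
    Matrix.trace ((s • (Matrix.of (fun i j => a i * a j + b i * b j)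
        : Matrix (Fin n) (Fin n) ℝ) + 1) * N)
      = s * (qf N a + qf N b) + Matrix.trace N := by
  rw [Matrix.add_mul, Matrix.one_mul, Matrix.trace_add, Matrix.smul_mul, Matrix.trace_smul,
    smul_eq_mul]
  congr 1
  have : Matrix.trace ((Matrix.of (fun i j => a i * a j + b i * b j)
      : Matrix (Fin n) (Fin n) ℝ) * N) = ∑ i, ∑ j, (a i * a j + b i * b j) * N j i := by
    simp [Matrix.trace, Matrix.mul_apply, Matrix.diag]
  rw [this]
  have hsplit : ∑ i, ∑ j, (a i * a j + b i * b j) * N j i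
      = (∑ i, ∑ j, (a i * a j) * N j i) + (∑ i, ∑ j, (b i * b j) * N j i) := by
    rw [← Finset.sum_add_distrib]
    refine Finset.sum_congr rfl fun i _ => ?_
    rw [← Finset.sum_add_distrib]
    refine Finset.sum_congr rfl fun j _ => by ring
  rw [hsplit, trace_outer, trace_outer]

lemma csqrt_bound {C mm t : ℝ} (hC : 0 ≤ C) (hm : 1 ≤ mm) (ht : 0 ≤ t) :
    C * Real.sqrt t - mm * t ≤ C ^ 2 / (4 * mm) := by
  have hu := Real.sq_sqrt ht
  set u := Real.sqrt t with hu'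
  have hu0 : 0 ≤ u := Real.sqrt_nonneg t
  rw [← hu, le_div_iff₀ (by linarith : (0:ℝ) < 4 * mm)]
  nlinarith [sq_nonneg (C - 2 * mm * u), sq_nonneg u]


noncomputable def nv (w : Fin n → ℝ) : ℝ := Real.sqrt (w ⬝ᵥ w)
noncomputable def ast (w : Fin n → ℝ) : Fin n → ℝ := (nv w)⁻¹ • w

lemma nv_pos {w : Fin n → ℝ} (hw : w ≠ 0) : 0 < nv w :=
  Real.sqrt_pos.2 (dot_self_pos hw)

lemma nv_sq (w : Fin n → ℝ) : nv w * nv w = w ⬝ᵥ w :=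
  Real.mul_self_sqrt (dot_self_nonneg w)

lemma ast_dot {w : Fin n → ℝ} (hw : w ≠ 0) : ast w ⬝ᵥ w = nv w := by
  have h := nv_sq w
  have h0 := (nv_pos hw).ne'
  rw [ast, smul_dot, ← h]
  field_simp

lemma ast_unit {w : Fin n → ℝ} (hw : w ≠ 0) : ast w ⬝ᵥ ast w = 1 := by
  have h := nv_sq w
  have h0 := (nv_pos hw).ne'
  rw [ast, smul_dot, dotProduct_smul, smul_eq_mul, ← h]
  field_simp

lemma qf_ast {w : Fin n → ℝ} (hw : w ≠ 0) (N : Matrix (Fin n) (Fin n) ℝ) :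
    qf N (ast w) = (w ⬝ᵥ N.mulVec w) / (w ⬝ᵥ w) := by
  have h := nv_sq w
  have h0 := (nv_pos hw).ne'
  rw [ast, qf_smul, ← h, qf]
  field_simp

lemma ast_dot_left {w : Fin n → ℝ} (hw : w ≠ 0) (b : Fin n → ℝ) :
    ast w ⬝ᵥ b = (w ⬝ᵥ b) / nv w := by
  rw [ast, smul_dot, div_eq_inv_mul]

lemma abs_half : |(1:ℝ)/2*(p-2)| = |p-2|/2 := by
  rw [abs_mul, show |(1:ℝ)/2| = 1/2 by norm_num]
  ring

/-- Upper estimate: with `a = ast w`, `c = mR`, every inner payoff is at most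
`A + C^2/(4 mR)`. -/
lemma upper_est {N : Matrix (Fin n) (Fin n) ℝ} {w : Fin n → ℝ} (hw : w ≠ 0)
    {b : Fin n → ℝ} (hb : b ⬝ᵥ b = 1) {d mR : ℝ} (hm : 1 ≤ mR) (hd : 0 ≤ d) (p : ℝ) :
    -((1/2*(p-2)) * (qf N (ast w) + qf N b) + N.trace) - (mR + d) * ((ast w + b) ⬝ᵥ w)
      ≤ -((p-2) * ((w ⬝ᵥ N.mulVec w) / (w ⬝ᵥ w)) + N.trace)
        + (|p-2| * Kf N * Real.sqrt (2 / nv w)) ^ 2 / (4*mR) := by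
  have hnv := nv_pos hw
  set t := nv w + b ⬝ᵥ w with ht
  have hbw : |b ⬝ᵥ w| ≤ nv w := abs_dot_le_of_unit hb w
  have ht0 : 0 ≤ t := by
    have := neg_abs_le (b ⬝ᵥ w)
    rw [ht]; linarith
  have hdot : (ast w + b) ⬝ᵥ w = t := by rw [add_dotProduct, ast_dot hw, ht]
  have hnorm : (ast w + b) ⬝ᵥ (ast w + b) = 2 / nv w * t := by
    rw [add_dot_add, ast_unit hw, hb, ast_dot_left hw b]
    have : w ⬝ᵥ b = t - nv w := by rw [ht, dotProduct_comm]; ring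
    rw [this]
    field_simp
    ring
  have hq : |qf N b - qf N (ast w)| ≤ 2 * Kf N * (Real.sqrt (2 / nv w) * Real.sqrt t) := by
    have h := qf_diff_bound (ast_unit hw) hb N
    rwa [hnorm, Real.sqrt_mul (div_nonneg (by norm_num) hnv.le) t] at h
  set C := |p-2| * Kf N * Real.sqrt (2 / nv w) with hC
  have hC0 : 0 ≤ C := by
    rw [hC]
    exact mul_nonneg (mul_nonneg (abs_nonneg _) (Kf_nonneg N)) (Real.sqrt_nonneg _)
  have hcs : C * Real.sqrt t - mR * t ≤ C^2/(4*mR) := csqrt_bound hC0 hm ht0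
  have hdt : mR * t ≤ (mR + d) * t := by nlinarith
  have hs : (1/2*(p-2)) * (qf N (ast w) - qf N b) ≤ C * Real.sqrt t := by
    calc (1/2*(p-2)) * (qf N (ast w) - qf N b)
        ≤ |(1/2*(p-2)) * (qf N (ast w) - qf N b)| := le_abs_self _
      _ = (|p-2|/2) * |qf N b - qf N (ast w)| := by rw [abs_mul, abs_half, abs_sub_comm (qf N (ast w)) (qf N b)]
      _ ≤ (|p-2|/2) * (2 * Kf N * (Real.sqrt (2 / nv w) * Real.sqrt t)) :=
          mul_le_mul_of_nonneg_left hq (by positivity)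
      _ = C * Real.sqrt t := by rw [hC]; ring
  rw [hdot, ← qf_ast hw N]
  nlinarith [hcs, hdt, hs]

/-- Lower estimate giving the value at `b = -a`. -/
lemma lower_elt1 (N : Matrix (Fin n) (Fin n) ℝ) (a w : Fin n → ℝ) (c p : ℝ) :
    -((1/2*(p-2)) * (qf N a + qf N (-a)) + N.trace) - (c + 0) * ((a + -a) ⬝ᵥ w)
      = -((p-2) * qf N a + N.trace) := by
  have h : a + -a = 0 := by abel
  rw [qf_neg, h, zero_dotProduct]
  ring

/-- Lower estimate: the payoff at `b = -ast w`, `d = mR` is at least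
`mR * t' - C₀`. -/
lemma lower_elt2 {N : Matrix (Fin n) (Fin n) ℝ} {w a : Fin n → ℝ} (hw : w ≠ 0)
    (ha : a ⬝ᵥ a = 1) {c mR : ℝ} (hc : 0 ≤ c) (hm : 0 ≤ mR) (p : ℝ) :
    mR * (nv w - a ⬝ᵥ w) - (|p-2| * Kf N + |N.trace|)
      ≤ -((1/2*(p-2)) * (qf N a + qf N (-(ast w))) + N.trace)
        - (c + mR) * ((a + -(ast w)) ⬝ᵥ w) := by
  have hdot : (a + -(ast w)) ⬝ᵥ w = -(nv w - a ⬝ᵥ w) := by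
    rw [add_dotProduct, neg_dotProduct, ast_dot hw]; ring
  have haw : |a ⬝ᵥ w| ≤ nv w := abs_dot_le_of_unit ha w
  have ht0 : 0 ≤ nv w - a ⬝ᵥ w := by
    have := le_abs_self (a ⬝ᵥ w); linarith
  rw [hdot, qf_neg]
  have hqa := qf_abs_le ha N
  have hqs := qf_abs_le (ast_unit hw) N
  have hs : (1/2*(p-2)) * (qf N a + qf N (ast w)) ≤ |p-2| * Kf N := by
    calc (1/2*(p-2)) * (qf N a + qf N (ast w))
        ≤ |(1/2*(p-2)) * (qf N a + qf N (ast w))| := le_abs_self _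
      _ = (|p-2|/2) * |qf N a + qf N (ast w)| := by rw [abs_mul, abs_half]
      _ ≤ (|p-2|/2) * (Kf N + Kf N) :=
          mul_le_mul_of_nonneg_left ((abs_add_le _ _).trans (by linarith)) (by positivity)
      _ = |p-2| * Kf N := by ring
  have htr := le_abs_self N.trace
  have hct : mR * (nv w - a ⬝ᵥ w) ≤ (c + mR) * (nv w - a ⬝ᵥ w) := by nlinarith
  nlinarith

/-- The limit value beats `A₁(a)` up to `2 C √t'`. -/
lemma lower_A1 {N : Matrix (Fin n) (Fin n) ℝ} {w a : Fin n → ℝ} (hw : w ≠ 0)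
    (ha : a ⬝ᵥ a = 1) (p : ℝ) :
    -((p-2) * ((w ⬝ᵥ N.mulVec w) / (w ⬝ᵥ w)) + N.trace)
      - 2 * (|p-2| * Kf N * Real.sqrt (2 / nv w)) * Real.sqrt (nv w - a ⬝ᵥ w)
      ≤ -((p-2) * qf N a + N.trace) := by
  have hnv := nv_pos hw
  have haw : |a ⬝ᵥ w| ≤ nv w := abs_dot_le_of_unit ha w
  have ht0 : 0 ≤ nv w - a ⬝ᵥ w := by
    have := le_abs_self (a ⬝ᵥ w); linarith
  have hnorm : (-(ast w) + a) ⬝ᵥ (-(ast w) + a) = 2 / nv w * (nv w - a ⬝ᵥ w) := by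
    rw [add_dot_add, unit_neg (ast_unit hw), ha, neg_dotProduct, ast_dot_left hw a]
    have : w ⬝ᵥ a = a ⬝ᵥ w := dotProduct_comm w a
    rw [this]
    field_simp
    ring
  have hq : |qf N a - qf N (ast w)| ≤
      2 * Kf N * (Real.sqrt (2 / nv w) * Real.sqrt (nv w - a ⬝ᵥ w)) := by
    have h := qf_diff_bound (unit_neg (ast_unit hw)) ha N
    rw [qf_neg] at h
    rwa [hnorm, Real.sqrt_mul (div_nonneg (by norm_num) hnv.le)] at h
  rw [← qf_ast hw N]
  have h1 : (p-2) * (qf N a - qf N (ast w)) ≤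
      |p-2| * (2 * Kf N * (Real.sqrt (2 / nv w) * Real.sqrt (nv w - a ⬝ᵥ w))) := by
    calc (p-2) * (qf N a - qf N (ast w))
        ≤ |(p-2) * (qf N a - qf N (ast w))| := le_abs_self _
      _ = |p-2| * |qf N a - qf N (ast w)| := abs_mul _ _
      _ ≤ _ := mul_le_mul_of_nonneg_left hq (abs_nonneg _)
  nlinarith [h1]

/-- Crude absolute bound on the payoff, uniform over the control sets. -/
lemma phi_abs_bound {N : Matrix (Fin n) (Fin n) ℝ} {w a b : Fin n → ℝ}
    (ha : a ⬝ᵥ a = 1) (hb : b ⬝ᵥ b = 1) {c d mR : ℝ}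
    (hc : c ∈ Set.Icc (0:ℝ) mR) (hd : d ∈ Set.Icc (0:ℝ) mR) (p : ℝ) :
    |-((1/2*(p-2)) * (qf N a + qf N b) + N.trace) - (c + d) * ((a + b) ⬝ᵥ w)|
      ≤ |p-2| * Kf N + |N.trace| + 2*mR*(2*nv w) := by
  have hqa := qf_abs_le ha N
  have hqb := qf_abs_le hb N
  have haw : |a ⬝ᵥ w| ≤ nv w := abs_dot_le_of_unit ha w
  have hbw : |b ⬝ᵥ w| ≤ nv w := abs_dot_le_of_unit hb w
  have habn : |(a + b) ⬝ᵥ w| ≤ 2 * nv w := by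
    rw [add_dotProduct]
    exact (abs_add_le _ _).trans (by linarith)
  have e0 : |(1/2*(p-2)) * (qf N a + qf N b)| ≤ |p-2| * Kf N := by
    rw [abs_mul, abs_half]
    calc (|p-2|/2) * |qf N a + qf N b|
        ≤ (|p-2|/2) * (Kf N + Kf N) :=
          mul_le_mul_of_nonneg_left ((abs_add_le _ _).trans (by linarith)) (by positivity)
      _ = |p-2| * Kf N := by ring
  have e1 : |(c + d) * ((a + b) ⬝ᵥ w)| ≤ 2*mR*(2*nv w) := by
    rw [abs_mul]
    have h2 : |c + d| ≤ 2*mR := by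
      rw [abs_of_nonneg (by linarith [hc.1, hd.1])]
      linarith [hc.2, hd.2]
    have hmR : 0 ≤ mR := le_trans hc.1 hc.2
    exact mul_le_mul h2 habn (abs_nonneg _) (by linarith)
  calc |-((1/2*(p-2)) * (qf N a + qf N b) + N.trace) - (c + d) * ((a + b) ⬝ᵥ w)|
      ≤ |-((1/2*(p-2)) * (qf N a + qf N b) + N.trace)| + |(c + d) * ((a + b) ⬝ᵥ w)| :=
        abs_sub _ _
    _ ≤ (|(1/2*(p-2)) * (qf N a + qf N b)| + |N.trace|) + |(c + d) * ((a + b) ⬝ᵥ w)| := by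
        rw [abs_neg]
        exact add_le_add (abs_add_le _ _) le_rfl
    _ ≤ |p-2| * Kf N + |N.trace| + 2*mR*(2*nv w) := by linarith

end BIaux

open BIaux Filter

set_option maxHeartbeats 1600000 in
/-- Constant-coefficient limit lemma: the Bellman–Isaacs inf-sup operators with
control bound `m` converge to minus the normalized `p`-Laplacian operator. -/
theorem bellman_isaacs_limit {n : ℕ} (p : ℝ) (hp : 1 < p)
    (ν : Fin n → ℝ) (hν : ν ≠ 0) (νseq : ℕ → Fin n → ℝ) (hνseq : ∀ m, νseq m ≠ 0)
    (hνlim : Filter.Tendsto νseq Filter.atTop (nhds ν))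
    (M : Matrix (Fin n) (Fin n) ℝ) (hM : M.IsSymm)
    (Mseq : ℕ → Matrix (Fin n) (Fin n) ℝ) (hMseq : ∀ m, (Mseq m).IsSymm)
    (hMlim : Filter.Tendsto Mseq Filter.atTop (nhds M)) :
    Filter.Tendsto
      (fun m : ℕ =>
        sInf { v : ℝ | ∃ (a : Fin n → ℝ) (c : ℝ), a ⬝ᵥ a = 1 ∧ c ∈ Set.Icc (0 : ℝ) m ∧
          v = sSup { w : ℝ | ∃ (b : Fin n → ℝ) (d : ℝ), b ⬝ᵥ b = 1 ∧ d ∈ Set.Icc (0 : ℝ) m ∧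
            w = -Matrix.trace
                ((((1 : ℝ) / 2 * (p - 2)) •
                    (Matrix.of (fun i j => a i * a j + b i * b j)
                      : Matrix (Fin n) (Fin n) ℝ) + 1) * Mseq m)
              - (c + d) * ((a + b) ⬝ᵥ νseq m) } })
      Filter.atTop
      (nhds (-((p - 2) * (M.mulVec ν ⬝ᵥ ν) / (ν ⬝ᵥ ν) + Matrix.trace M))) := by
  classical
  have hn : 0 < n := Nat.pos_of_ne_zero (by rintro rfl; exact hν (funext fun i => i.elim0))
  obtain ⟨a₀, ha₀⟩ : ∃ a₀ : Fin n → ℝ, a₀ ⬝ᵥ a₀ = 1 := by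
    refine ⟨Pi.single ⟨0, hn⟩ 1, ?_⟩
    simp [dotProduct, Pi.single_apply]
  -- rewrite the limit value
  have hLrw : -((p - 2) * (M.mulVec ν ⬝ᵥ ν) / (ν ⬝ᵥ ν) + Matrix.trace M)
      = -((p - 2) * ((ν ⬝ᵥ M.mulVec ν) / (ν ⬝ᵥ ν)) + Matrix.trace M) := by
    rw [dotProduct_comm]; ring
  rw [hLrw]
  -- rewrite the trace inside the sets
  simp only [BIaux.trace_eq]
  -- limit facts
  have htr : Tendsto (fun m => (Mseq m).trace) atTop (nhds M.trace) :=
    ((continuous_id.matrix_trace.tendsto M).comp hMlim)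
  have hentry : ∀ i j, Tendsto (fun m => Mseq m i j) atTop (nhds (M i j)) := fun i j =>
    ((continuous_id.matrix_elem i j).tendsto M).comp hMlim
  have hKlim : Tendsto (fun m => Kf (Mseq m)) atTop (nhds (Kf M)) := by
    show Tendsto (fun m => ∑ i, ∑ j, |Mseq m i j|) atTop (nhds (∑ i, ∑ j, |M i j|))
    exact tendsto_finset_sum _ fun i _ => tendsto_finset_sum _ fun j _ => (hentry i j).abs
  have hdd : Tendsto (fun m => νseq m ⬝ᵥ νseq m) atTop (nhds (ν ⬝ᵥ ν)) :=
    ((continuous_id.dotProduct continuous_id).tendsto ν).comp hνlim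
  have hpair : Tendsto (fun m => (Mseq m, νseq m)) atTop (nhds (M, ν)) :=
    hMlim.prodMk_nhds hνlim
  have hcontq : Continuous (fun z : Matrix (Fin n) (Fin n) ℝ × (Fin n → ℝ) =>
      z.2 ⬝ᵥ z.1.mulVec z.2) :=
    continuous_snd.dotProduct (continuous_fst.matrix_mulVec continuous_snd)
  have hnum : Tendsto (fun m => νseq m ⬝ᵥ (Mseq m).mulVec (νseq m)) atTop
      (nhds (ν ⬝ᵥ M.mulVec ν)) := (hcontq.tendsto (M, ν)).comp hpair
  have hQlim : Tendsto (fun m => (νseq m ⬝ᵥ (Mseq m).mulVec (νseq m)) / (νseq m ⬝ᵥ νseq m))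
      atTop (nhds ((ν ⬝ᵥ M.mulVec ν) / (ν ⬝ᵥ ν))) :=
    hnum.div hdd (ne_of_gt (dot_self_pos hν))
  have hAlim : Tendsto
      (fun m => -((p - 2) * ((νseq m ⬝ᵥ (Mseq m).mulVec (νseq m)) / (νseq m ⬝ᵥ νseq m))
        + (Mseq m).trace)) atTop
      (nhds (-((p - 2) * ((ν ⬝ᵥ M.mulVec ν) / (ν ⬝ᵥ ν)) + Matrix.trace M))) :=
    ((hQlim.const_mul (p - 2)).add htr).neg
  have hnv : Tendsto (fun m => nv (νseq m)) atTop (nhds (nv ν)) := by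
    show Tendsto (fun m => Real.sqrt (νseq m ⬝ᵥ νseq m)) atTop (nhds (Real.sqrt (ν ⬝ᵥ ν)))
    exact hdd.sqrt
  have hnvpos : 0 < nv ν := nv_pos hν
  have hClim : Tendsto (fun m => |p - 2| * Kf (Mseq m) * Real.sqrt (2 / nv (νseq m))) atTop
      (nhds (|p - 2| * Kf M * Real.sqrt (2 / nv ν))) :=
    ((hKlim.const_mul _).mul (((tendsto_const_nhds (x := (2:ℝ))).div hnv hnvpos.ne').sqrt))
  have hC0lim : Tendsto (fun m => |p - 2| * Kf (Mseq m) + |(Mseq m).trace|) atTop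
      (nhds (|p - 2| * Kf M + |M.trace|)) := (hKlim.const_mul _).add htr.abs
  have hsqm : Tendsto (fun m : ℕ => Real.sqrt (m : ℝ)) atTop atTop := by
    apply Filter.tendsto_atTop_atTop_of_monotone
    · intro a b hab; exact Real.sqrt_le_sqrt (by exact_mod_cast hab)
    · intro b
      refine ⟨(Nat.ceil (max b 0)) ^ 2, ?_⟩
      push_cast
      rw [Real.sqrt_sq (by positivity)]
      exact (le_max_left b 0).trans (Nat.le_ceil _)
  have hE : Tendsto (fun m : ℕ => Real.sqrt ((Real.sqrt (m : ℝ))⁻¹)) atTop (nhds 0) := by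
    have h := hsqm.inv_tendsto_atTop
    simpa using Filter.Tendsto.sqrt h
  have h4m : Tendsto (fun m : ℕ => ((4:ℝ) * (m : ℝ))⁻¹) atTop (nhds 0) := by
    apply Filter.Tendsto.inv_tendsto_atTop
    exact Filter.Tendsto.const_mul_atTop (by norm_num) tendsto_natCast_atTop_atTop
  -- upper comparison sequence
  have hψp : Tendsto (fun m : ℕ =>
      -((p - 2) * ((νseq m ⬝ᵥ (Mseq m).mulVec (νseq m)) / (νseq m ⬝ᵥ νseq m)) + (Mseq m).trace)
        + (|p - 2| * Kf (Mseq m) * Real.sqrt (2 / nv (νseq m))) ^ 2 / (4 * (m : ℝ))) atTop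
      (nhds (-((p - 2) * ((ν ⬝ᵥ M.mulVec ν) / (ν ⬝ᵥ ν)) + Matrix.trace M))) := by
    have h := hAlim.add (((hClim.pow 2)).mul h4m)
    simpa [div_eq_mul_inv] using h
  -- lower comparison sequence
  have hxlim : Tendsto (fun m : ℕ =>
      -((p - 2) * ((νseq m ⬝ᵥ (Mseq m).mulVec (νseq m)) / (νseq m ⬝ᵥ νseq m)) + (Mseq m).trace)
        - 2 * (|p - 2| * Kf (Mseq m) * Real.sqrt (2 / nv (νseq m)))
            * Real.sqrt ((Real.sqrt (m : ℝ))⁻¹)) atTop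
      (nhds (-((p - 2) * ((ν ⬝ᵥ M.mulVec ν) / (ν ⬝ᵥ ν)) + Matrix.trace M))) := by
    have h := hAlim.sub (((hClim.const_mul 2)).mul hE)
    simpa [mul_assoc] using h
  have hylim : Tendsto (fun m : ℕ =>
      Real.sqrt (m : ℝ) - (|p - 2| * Kf (Mseq m) + |(Mseq m).trace|)) atTop atTop := by
    have h := Filter.Tendsto.add_atTop hC0lim.neg hsqm
    refine h.congr fun m => by ring
  have hψm : Tendsto (fun m : ℕ => min
      (-((p - 2) * ((νseq m ⬝ᵥ (Mseq m).mulVec (νseq m)) / (νseq m ⬝ᵥ νseq m)) + (Mseq m).trace)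
        - 2 * (|p - 2| * Kf (Mseq m) * Real.sqrt (2 / nv (νseq m)))
            * Real.sqrt ((Real.sqrt (m : ℝ))⁻¹))
      (Real.sqrt (m : ℝ) - (|p - 2| * Kf (Mseq m) + |(Mseq m).trace|))) atTop
      (nhds (-((p - 2) * ((ν ⬝ᵥ M.mulVec ν) / (ν ⬝ᵥ ν)) + Matrix.trace M))) := by
    set L := -((p - 2) * ((ν ⬝ᵥ M.mulVec ν) / (ν ⬝ᵥ ν)) + Matrix.trace M) with hL
    have h1 := hxlim.eventually (eventually_le_nhds (lt_add_one L))
    have h2 := hylim.eventually_ge_atTop (L + 1)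
    refine hxlim.congr' ?_
    filter_upwards [h1, h2] with m hm1 hm2
    exact (min_eq_left (hm1.trans hm2)).symm
  refine tendsto_of_tendsto_of_tendsto_of_le_of_le' hψm hψp ?_ ?_
  · -- lower bound
    filter_upwards [Filter.eventually_ge_atTop 1] with m hm
    have hm1 : (1:ℝ) ≤ (m:ℝ) := by exact_mod_cast hm
    have hTbdd : ∀ (a : Fin n → ℝ) (c : ℝ), a ⬝ᵥ a = 1 → c ∈ Set.Icc (0:ℝ) (m:ℝ) →
        BddAbove { w : ℝ | ∃ (b : Fin n → ℝ) (d : ℝ), b ⬝ᵥ b = 1 ∧ d ∈ Set.Icc (0:ℝ) (m:ℝ) ∧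
          w = -((1:ℝ)/2*(p-2) * (qf (Mseq m) a + qf (Mseq m) b) + (Mseq m).trace)
            - (c + d) * ((a + b) ⬝ᵥ νseq m) } := by
      intro a c ha hc
      refine ⟨|p-2| * Kf (Mseq m) + |(Mseq m).trace| + 2*(m:ℝ)*(2*nv (νseq m)), ?_⟩
      rintro x ⟨b, d, hb, hd, rfl⟩
      exact (le_abs_self _).trans (phi_abs_bound ha hb hc hd p)
    refine le_csInf ⟨_, a₀, 0, ha₀, Set.mem_Icc.mpr ⟨le_refl 0, Nat.cast_nonneg m⟩, rfl⟩ ?_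
    rintro v ⟨a, c, ha, hc, rfl⟩
    have h1 := le_csSup (hTbdd a c ha hc)
      ⟨-a, 0, unit_neg ha, Set.mem_Icc.mpr ⟨le_refl 0, Nat.cast_nonneg m⟩, rfl⟩
    rw [lower_elt1 (Mseq m) a (νseq m) c p] at h1
    have h2 := le_csSup (hTbdd a c ha hc)
      ⟨-(ast (νseq m)), (m:ℝ), unit_neg (ast_unit (hνseq m)),
        Set.mem_Icc.mpr ⟨Nat.cast_nonneg m, le_refl _⟩, rfl⟩
    have h2' := (lower_elt2 (N := Mseq m) (hνseq m) ha hc.1 (Nat.cast_nonneg m) p).trans h2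
    by_cases hcase : nv (νseq m) - a ⬝ᵥ νseq m ≤ (Real.sqrt (m:ℝ))⁻¹
    · refine (min_le_left _ _).trans ?_
      have hA1 := lower_A1 (N := Mseq m) (hνseq m) ha p
      have hsq : Real.sqrt (nv (νseq m) - a ⬝ᵥ νseq m) ≤ Real.sqrt ((Real.sqrt (m:ℝ))⁻¹) :=
        Real.sqrt_le_sqrt hcase
      have hCge : 0 ≤ 2 * (|p-2| * Kf (Mseq m) * Real.sqrt (2 / nv (νseq m))) :=
        mul_nonneg (by norm_num)
          (mul_nonneg (mul_nonneg (abs_nonneg _) (Kf_nonneg _)) (Real.sqrt_nonneg _))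
      have hmul := mul_le_mul_of_nonneg_left hsq hCge
      linarith [hA1, h1, hmul]
    · push_neg at hcase
      refine (min_le_right _ _).trans ?_
      have hsm0 : (0:ℝ) < Real.sqrt (m:ℝ) := Real.sqrt_pos.2 (by linarith)
      have hsm0' := hsm0.ne'
      have hms : (m:ℝ) * (Real.sqrt (m:ℝ))⁻¹ = Real.sqrt (m:ℝ) := by
        rw [mul_inv_eq_iff_eq_mul₀ hsm0', Real.mul_self_sqrt (Nat.cast_nonneg _)]
      have hstep := mul_le_mul_of_nonneg_left hcase.le (by linarith : (0:ℝ) ≤ (m:ℝ))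
      linarith [h2']
  · -- upper bound
    filter_upwards [Filter.eventually_ge_atTop 1] with m hm
    have hm1 : (1:ℝ) ≤ (m:ℝ) := by exact_mod_cast hm
    have hTbdd : ∀ (a : Fin n → ℝ) (c : ℝ), a ⬝ᵥ a = 1 → c ∈ Set.Icc (0:ℝ) (m:ℝ) →
        BddAbove { w : ℝ | ∃ (b : Fin n → ℝ) (d : ℝ), b ⬝ᵥ b = 1 ∧ d ∈ Set.Icc (0:ℝ) (m:ℝ) ∧
          w = -((1:ℝ)/2*(p-2) * (qf (Mseq m) a + qf (Mseq m) b) + (Mseq m).trace)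
            - (c + d) * ((a + b) ⬝ᵥ νseq m) } := by
      intro a c ha hc
      refine ⟨|p-2| * Kf (Mseq m) + |(Mseq m).trace| + 2*(m:ℝ)*(2*nv (νseq m)), ?_⟩
      rintro x ⟨b, d, hb, hd, rfl⟩
      exact (le_abs_self _).trans (phi_abs_bound ha hb hc hd p)
    have hOb : BddBelow { v : ℝ | ∃ (a : Fin n → ℝ) (c : ℝ), a ⬝ᵥ a = 1 ∧
        c ∈ Set.Icc (0:ℝ) (m:ℝ) ∧
        v = sSup { w : ℝ | ∃ (b : Fin n → ℝ) (d : ℝ), b ⬝ᵥ b = 1 ∧ d ∈ Set.Icc (0:ℝ) (m:ℝ) ∧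
          w = -((1:ℝ)/2*(p-2) * (qf (Mseq m) a + qf (Mseq m) b) + (Mseq m).trace)
            - (c + d) * ((a + b) ⬝ᵥ νseq m) } } := by
      refine ⟨-(|p-2| * Kf (Mseq m) + |(Mseq m).trace| + 2*(m:ℝ)*(2*nv (νseq m))), ?_⟩
      rintro v ⟨a, c, ha, hc, rfl⟩
      have hmemT' : (-((1:ℝ)/2*(p-2) * (qf (Mseq m) a + qf (Mseq m) a₀) + (Mseq m).trace)
            - (c + 0) * ((a + a₀) ⬝ᵥ νseq m)) ∈
          { w : ℝ | ∃ (b : Fin n → ℝ) (d : ℝ), b ⬝ᵥ b = 1 ∧ d ∈ Set.Icc (0:ℝ) (m:ℝ) ∧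
            w = -((1:ℝ)/2*(p-2) * (qf (Mseq m) a + qf (Mseq m) b) + (Mseq m).trace)
              - (c + d) * ((a + b) ⬝ᵥ νseq m) } :=
        ⟨a₀, 0, ha₀, Set.mem_Icc.mpr ⟨le_refl 0, Nat.cast_nonneg m⟩, rfl⟩
      have hmemT := le_csSup (hTbdd a c ha hc) hmemT'
      have habs := phi_abs_bound (N := Mseq m) (w := νseq m) ha ha₀ hc
        (Set.mem_Icc.mpr ⟨le_refl 0, Nat.cast_nonneg m⟩) p
      have hneg := neg_abs_le (-((1:ℝ)/2*(p-2) * (qf (Mseq m) a + qf (Mseq m) a₀)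
        + (Mseq m).trace) - (c + 0) * ((a + a₀) ⬝ᵥ νseq m))
      linarith
    refine le_trans (csInf_le hOb ⟨ast (νseq m), (m:ℝ), ast_unit (hνseq m),
      Set.mem_Icc.mpr ⟨Nat.cast_nonneg m, le_refl _⟩, rfl⟩) ?_
    refine csSup_le ⟨_, a₀, 0, ha₀, Set.mem_Icc.mpr ⟨le_refl 0, Nat.cast_nonneg m⟩, rfl⟩ ?_
    rintro x ⟨b, d, hb, hd, rfl⟩
    exact upper_est (hνseq m) hb hm1 hd.1 p
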